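/- Let ι be a nonempty finite index set, n_i ∈ ℝ^d and ν_i ∈ ℝ for i ∈ ι, and define the piecewise-linear convex function L(x) := max_{i ∈ ι} (⟨n_i, x⟩ + ν_i). Let ρ : ℝ^d → ℝ be a continuously differentiable mollifier and h > 0. Then the mollification L_h is differentiable, and for every x ∈ ℝ^d the gradient ∇L_h(x) lies in the convex hull of {n_i : i ∈ ι}. (This is the core of part (2) of the paper's Lemma: the slopes of the smoothed Legendre transform L_{ν,h^∨} always lie in the polytope spanned by the vertices.) -/

import Mathlib

open MeasureTheory RealInnerProductSpace
open scoped Convolution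

/-- For the piecewise-linear convex function `L(x) = max_i (⟨n_i, x⟩ + ν_i)` and a `C¹`
mollifier `ρ`, the mollification `L_h(x) = ∫ ρ(z) L(x − h z) dz` is differentiable and
its gradient at every point lies in the convex hull of the slopes `{n_i}`. -/
theorem stmt_10 (d : ℕ) (ι : Type*) [Fintype ι] [Nonempty ι]
    (n : ι → EuclideanSpace ℝ (Fin d)) (ν : ι → ℝ)
    (L : EuclideanSpace ℝ (Fin d) → ℝ)
    (hL : ∀ x, L x = ⨆ i, (⟪n i, x⟫ + ν i))
    (ρ : EuclideanSpace ℝ (Fin d) → ℝ) (hρC1 : ContDiff ℝ 1 ρ)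
    (hρ0 : ∀ z, 0 ≤ ρ z) (hρsupp : HasCompactSupport ρ) (hρ1 : ∫ z, ρ z = 1)
    (h : ℝ) (hh : 0 < h)
    (Lh : EuclideanSpace ℝ (Fin d) → ℝ)
    (hLh : ∀ x, Lh x = ∫ z, ρ z * L (x - h • z)) :
    Differentiable ℝ Lh ∧ ∀ x, gradient Lh x ∈ convexHull ℝ (Set.range n) := by
  -- the sublinear bound for L
  have hLsub : ∀ a b : EuclideanSpace ℝ (Fin d), ∀ c : ℝ, (∀ i, ⟪n i, a - b⟫ ≤ c) → L a ≤ L b + c := by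
    intro a b c hc
    rw [hL a, hL b]
    refine ciSup_le fun i => ?_
    have h1 : ⟪n i, a⟫ + ν i = (⟪n i, b⟫ + ν i) + ⟪n i, a - b⟫ := by
      rw [inner_sub_right]; ring
    rw [h1]
    exact add_le_add (le_ciSup (f := fun j => ⟪n j, b⟫ + ν j)
      (Set.Finite.bddAbove (Set.finite_range _)) i) (hc i)
  -- L is continuous (Lipschitz)
  obtain ⟨C, hC⟩ := (Set.finite_range fun i => ‖n i‖).bddAbove
  have hC0 : 0 ≤ C := le_trans (norm_nonneg _) (hC (Set.mem_range_self (Classical.arbitrary ι)))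
  have hLlip : ∀ a b : EuclideanSpace ℝ (Fin d), L a - L b ≤ C * ‖a - b‖ := by
    intro a b
    have := hLsub a b (C * ‖a - b‖) fun i => by
      calc ⟪n i, a - b⟫ ≤ ‖n i‖ * ‖a - b‖ := real_inner_le_norm _ _
        _ ≤ C * ‖a - b‖ := by
            exact mul_le_mul_of_nonneg_right (hC (Set.mem_range_self i)) (norm_nonneg _)
    linarith
  have hLcont : Continuous L := by
    rw [Metric.continuous_iff]
    intro b ε hε
    rcases eq_or_lt_of_le hC0 with hC' | hC'
    · exact ⟨1, one_pos, fun a _ => by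
        have h1 := hLlip a b
        have h2 := hLlip b a
        rw [← hC'] at h1 h2
        simp only [Real.dist_eq, zero_mul] at *
        rw [abs_sub_lt_iff]; constructor <;> linarith⟩
    · refine ⟨ε / C, div_pos hε hC', fun a ha => ?_⟩
      have h1 := hLlip a b
      have h2 := hLlip b a
      rw [Real.dist_eq, abs_sub_lt_iff]
      have hab : ‖a - b‖ = dist a b := (dist_eq_norm a b).symm
      have hba : ‖b - a‖ = dist a b := by rw [← dist_eq_norm, dist_comm]
      rw [hab] at h1; rw [hba] at h2
      have : C * dist a b < ε := by
        calc C * dist a b < C * (ε / C) := by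
              exact mul_lt_mul_of_pos_left ha hC'
          _ = ε := by field_simp
      constructor <;> linarith
  -- express Lh as a convolution composed with scaling
  set Λ : EuclideanSpace ℝ (Fin d) → ℝ := fun y => L (h • y) with hΛ
  have hΛcont : Continuous Λ := hLcont.comp (continuous_const_smul h)
  have hΛloc : LocallyIntegrable Λ volume := hΛcont.locallyIntegrable
  set conv : EuclideanSpace ℝ (Fin d) → ℝ := ρ ⋆[ContinuousLinearMap.mul ℝ ℝ] Λ with hconv
  have hconvdiff : Differentiable ℝ conv := fun x =>
    (hρsupp.hasFDerivAt_convolution_left _ hρC1 hΛloc x).differentiableAt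
  have hLheq : Lh = fun x => conv (h⁻¹ • x) := by
    funext x
    rw [hLh, hconv, convolution_def]
    congr 1
    funext t
    simp only [ContinuousLinearMap.mul_apply', hΛ]
    congr 2
    rw [smul_sub, smul_smul, mul_inv_cancel₀ hh.ne', one_smul]
  have hdiff : Differentiable ℝ Lh := by
    rw [hLheq]
    exact hconvdiff.comp (differentiable_id.const_smul h⁻¹)
  refine ⟨hdiff, fun x => ?_⟩
  -- integrability of the integrands
  have hint : ∀ y : EuclideanSpace ℝ (Fin d), Integrable (fun z => ρ z * L (y - h • z)) := by
    intro y
    refine Continuous.integrable_of_hasCompactSupport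
      (hρC1.continuous.mul (hLcont.comp (by fun_prop))) ?_
    exact hρsupp.mul_right
  have hρint : Integrable ρ := hρC1.continuous.integrable_of_hasCompactSupport hρsupp
  -- directional derivative bound
  set g := gradient Lh x with hg
  have hkey : ∀ v : EuclideanSpace ℝ (Fin d), ⟪g, v⟫ ≤ ⨆ i, ⟪n i, v⟫ := by
    intro v
    set M := ⨆ i, ⟪n i, v⟫ with hM
    have hMi : ∀ i, ⟪n i, v⟫ ≤ M := fun i =>
      le_ciSup (f := fun j => ⟪n j, v⟫) (Set.Finite.bddAbove (Set.finite_range _)) i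
    -- the function along direction v
    set φ : ℝ → ℝ := fun t => Lh (x + t • v) with hφ
    have hφderiv : HasDerivAt φ (fderiv ℝ Lh x v) 0 := by
      have h1 : HasDerivAt (fun t : ℝ => x + t • v) v 0 := by
        have := ((hasDerivAt_id (0 : ℝ)).smul_const v).const_add x
        simpa using this
      have h2 : HasFDerivAt Lh (fderiv ℝ Lh x) (x + (0:ℝ) • v) := by
        simpa using (hdiff x).hasFDerivAt
      have := h2.comp_hasDerivAt 0 h1
      exact this
    have hgv : fderiv ℝ Lh x v = ⟪g, v⟫ := by
      rw [hg, gradient]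
      rw [InnerProductSpace.toDual_symm_apply]
    -- the one-sided bound
    have hbound : ∀ t : ℝ, 0 < t → φ t ≤ φ 0 + t * M := by
      intro t ht
      have hpt : ∀ z : EuclideanSpace ℝ (Fin d), ρ z * L (x + t • v - h • z)
          ≤ ρ z * L (x - h • z) + (t * M) * ρ z := by
        intro z
        have h1 : L (x + t • v - h • z) ≤ L (x - h • z) + t * M := by
          refine hLsub _ _ _ fun i => ?_
          have : (x + t • v - h • z) - (x - h • z) = t • v := by abel
          rw [this, real_inner_smul_right]
          exact mul_le_mul_of_nonneg_left (hMi i) ht.le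
        calc ρ z * L (x + t • v - h • z) ≤ ρ z * (L (x - h • z) + t * M) :=
              mul_le_mul_of_nonneg_left h1 (hρ0 z)
          _ = ρ z * L (x - h • z) + (t * M) * ρ z := by ring
      have hφt : φ t = ∫ z, ρ z * L (x + t • v - h • z) := by
        rw [hφ]; exact hLh _
      have hφ0 : φ 0 = ∫ z, ρ z * L (x - h • z) := by
        rw [hφ]; simpa using hLh x
      rw [hφt, hφ0]
      have hint2 : Integrable (fun z => ρ z * L (x - h • z) + (t * M) * ρ z) :=
        (hint x).add (hρint.const_mul _)
      calc (∫ z, ρ z * L (x + t • v - h • z))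
          ≤ ∫ z, (ρ z * L (x - h • z) + (t * M) * ρ z) :=
            integral_mono (hint _) hint2 hpt
        _ = (∫ z, ρ z * L (x - h • z)) + t * M := by
            rw [integral_add (hint x) (hρint.const_mul _), integral_const_mul, hρ1, mul_one]
    -- pass to the limit of slopes from the right
    rw [← hgv]
    have hslope : Filter.Tendsto (slope φ 0) (nhdsWithin 0 (Set.Ioi 0))
        (nhds (fderiv ℝ Lh x v)) := by
      have := hasDerivAt_iff_tendsto_slope.mp hφderiv
      exact this.mono_left (nhdsWithin_mono 0 fun t ht => Set.mem_compl_singleton_iff.mpr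
        (ne_of_gt ht))
    refine le_of_tendsto hslope ?_
    filter_upwards [self_mem_nhdsWithin] with t ht
    have ht' : (0:ℝ) < t := ht
    rw [slope_def_field]
    rw [div_le_iff₀ (by simpa using ht')]
    have := hbound t ht'
    simp only [sub_zero]
    linarith
  -- conclude via Hahn-Banach separation
  by_contra hgK
  have hKconv : Convex ℝ (convexHull ℝ (Set.range n)) := convex_convexHull ℝ _
  have hKclosed : IsClosed (convexHull ℝ (Set.range n)) :=
    ((Set.finite_range n).isCompact_convexHull (𝕜 := ℝ)).isClosed
  obtain ⟨f, u, hfa, hfg⟩ := geometric_hahn_banach_closed_point hKconv hKclosed hgK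
  set v := (InnerProductSpace.toDual ℝ (EuclideanSpace ℝ (Fin d))).symm f with hv
  have hvw : ∀ w : EuclideanSpace ℝ (Fin d), ⟪v, w⟫ = f w := fun w => InnerProductSpace.toDual_symm_apply
  have h1 : ⟪g, v⟫ ≤ ⨆ i, ⟪n i, v⟫ := hkey v
  have h2 : (⨆ i, ⟪n i, v⟫) ≤ u := by
    refine ciSup_le fun i => ?_
    have := hfa (n i) (subset_convexHull ℝ _ (Set.mem_range_self i))
    rw [← hvw (n i), real_inner_comm] at this
    exact this.le
  have h3 : u < ⟪g, v⟫ := by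
    rw [real_inner_comm, hvw g]
    exact hfg
  linarith
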